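/- For each i ∈ {1,2,3}, any n ≥ 1, and any n×n complex matrix M, the matrix exponential satisfies (Π^i ⊗ I_n) · exp(β ⊗ M) · (Π^i ⊗ I_n) = exp(α^i ⊗ M), where ⊗ denotes the Kronecker product. This reduces implementing the kinetic and vector-potential exponentials in the α^i basis to implementing them in the diagonal β basis. -/

import Mathlib

open Matrix Kronecker

noncomputable section

/-- The Pauli matrices: `pauli 0 = σ¹`, `pauli 1 = σ²`, `pauli 2 = σ³`. -/
def pauli : Fin 3 → Matrix (Fin 2) (Fin 2) ℂ
  | 0 => !![0, 1; 1, 0]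
  | 1 => !![0, -Complex.I; Complex.I, 0]
  | 2 => !![1, 0; 0, -1]

/-- The Dirac matrices `α^i = σ¹ ⊗ σ^i` in the standard representation
(`diracAlpha i` is `α^(i+1)`). -/
def diracAlpha (i : Fin 3) : Matrix (Fin 2 × Fin 2) (Fin 2 × Fin 2) ℂ :=
  pauli 0 ⊗ₖ pauli i

/-- The Dirac matrix `β = σ³ ⊗ I₂` in the standard representation. -/
def diracBeta : Matrix (Fin 2 × Fin 2) (Fin 2 × Fin 2) ℂ :=
  pauli 2 ⊗ₖ (1 : Matrix (Fin 2) (Fin 2) ℂ)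

/-- `Π^i = (1/√2)(β + α^i)`. -/
def Pi (i : Fin 3) : Matrix (Fin 2 × Fin 2) (Fin 2 × Fin 2) ℂ :=
  ((1 / Real.sqrt 2 : ℝ) : ℂ) • (diracBeta + diracAlpha i)

lemma pauli_sq (i : Fin 3) : pauli i * pauli i = 1 := by
  fin_cases i <;>
    · norm_num [pauli, Matrix.mul_fin_two, Complex.I_mul_I, Complex.ext_iff]
      rw [Matrix.one_fin_two]

lemma pauli_anticomm : pauli 2 * pauli 0 = -(pauli 0 * pauli 2) := by
  norm_num [pauli, Matrix.mul_fin_two, Complex.ext_iff, Matrix.ext_iff, Fin.forall_fin_two]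

lemma beta_sq : diracBeta * diracBeta = 1 := by
  rw [diracBeta, ← Matrix.mul_kronecker_mul, pauli_sq, Matrix.one_mul,
    Matrix.one_kronecker_one]

lemma alpha_sq (i : Fin 3) : diracAlpha i * diracAlpha i = 1 := by
  rw [diracAlpha, ← Matrix.mul_kronecker_mul, pauli_sq, pauli_sq,
    Matrix.one_kronecker_one]

lemma neg_kron {m n p q : Type*} (A : Matrix m n ℂ) (B : Matrix p q ℂ) :
    (-A) ⊗ₖ B = -(A ⊗ₖ B) := by
  ext ⟨a,b⟩ ⟨c,d⟩
  simp [Matrix.kroneckerMap_apply]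

lemma beta_alpha (i : Fin 3) :
    diracBeta * diracAlpha i = -(diracAlpha i * diracBeta) := by
  rw [diracBeta, diracAlpha, ← Matrix.mul_kronecker_mul, ← Matrix.mul_kronecker_mul,
    Matrix.one_mul, Matrix.mul_one, pauli_anticomm, neg_kron]

lemma c_sq : (((1 / Real.sqrt 2 : ℝ) : ℂ)) * (((1 / Real.sqrt 2 : ℝ) : ℂ)) = 1 / 2 := by
  rw [← Complex.ofReal_mul]
  rw [div_mul_div_comm, Real.mul_self_sqrt (by norm_num : (0:ℝ) ≤ 2)]
  norm_num

lemma Pi_sq (i : Fin 3) : Pi i * Pi i = 1 := by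
  rw [Pi, Matrix.smul_mul, Matrix.mul_smul, smul_smul, c_sq,
    Matrix.add_mul, Matrix.mul_add, Matrix.mul_add, beta_sq, alpha_sq, beta_alpha]
  module

lemma Pi_beta_Pi (i : Fin 3) : Pi i * diracBeta * Pi i = diracAlpha i := by
  have h1 : diracAlpha i * diracBeta * diracBeta = diracAlpha i := by
    rw [Matrix.mul_assoc, beta_sq, Matrix.mul_one]
  have hAB : diracAlpha i * diracBeta = -(diracBeta * diracAlpha i) := by
    rw [beta_alpha, neg_neg]
  have h2 : diracAlpha i * diracBeta * diracAlpha i = -diracBeta := by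
    rw [hAB, Matrix.neg_mul, Matrix.mul_assoc, alpha_sq, Matrix.mul_one]
  have key : (diracBeta + diracAlpha i) * diracBeta * (diracBeta + diracAlpha i)
      = (2 : ℂ) • diracAlpha i := by
    rw [Matrix.add_mul, beta_sq, Matrix.add_mul, Matrix.one_mul, Matrix.mul_add, h1, h2]
    module
  rw [Pi, Matrix.smul_mul, Matrix.smul_mul, Matrix.mul_smul, smul_smul, c_sq, key,
    smul_smul]
  norm_num

/-- Conjugating `exp(β ⊗ M)` by `Π^i ⊗ I_n` yields `exp(α^i ⊗ M)`: this reduces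
implementing exponentials in the `α^i` basis to the diagonal `β` basis. -/
theorem Pi_conj_exp_kronecker (i : Fin 3) (n : ℕ) (hn : 1 ≤ n)
    (M : Matrix (Fin n) (Fin n) ℂ) :
    (Pi i ⊗ₖ (1 : Matrix (Fin n) (Fin n) ℂ)) * NormedSpace.exp (diracBeta ⊗ₖ M) *
      (Pi i ⊗ₖ (1 : Matrix (Fin n) (Fin n) ℂ)) =
    NormedSpace.exp (diracAlpha i ⊗ₖ M) := by
  set P := Pi i ⊗ₖ (1 : Matrix (Fin n) (Fin n) ℂ) with hP
  have hP2 : P * P = 1 := by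
    rw [hP, ← Matrix.mul_kronecker_mul, Pi_sq, Matrix.mul_one, Matrix.one_kronecker_one]
  have hU : IsUnit P := ⟨⟨P, P, hP2, hP2⟩, rfl⟩
  have hinv : P⁻¹ = P := Matrix.inv_eq_right_inv hP2
  have hconj : P * (diracBeta ⊗ₖ M) * P⁻¹ = diracAlpha i ⊗ₖ M := by
    rw [hinv, hP, ← Matrix.mul_kronecker_mul, ← Matrix.mul_kronecker_mul, Matrix.one_mul,
      Matrix.mul_one, Pi_beta_Pi]
  conv_rhs => rw [← hconj]
  rw [Matrix.exp_conj P _ hU, hinv]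

end
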